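/- Let X ⊂ S^{n-1}(m) be a finite antipodal set such that there is a constant c with ∑_{x∈X}(x,α)⁴ = c(α,α)² for all α ∈ ℝ^n. Then the rank-one matrices {x·xᵀ : x ∈ X} span the space of symmetric n×n real matrices. -/

import Mathlib

open Matrix Finset

section Aux
variable {n : ℕ} (X : Finset (Fin n → ℝ)) (c : ℝ)

lemma polar2 (hc : ∀ α : Fin n → ℝ, ∑ x ∈ X, (x ⬝ᵥ α) ^ 4 = c * (α ⬝ᵥ α) ^ 2) :
    ∀ α β : Fin n → ℝ, ∑ x ∈ X, (x ⬝ᵥ α)^2 * (x ⬝ᵥ β)^2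
      = (c/3) * ((α ⬝ᵥ α)*(β ⬝ᵥ β) + 2*(α ⬝ᵥ β)^2) := by
  intro α β
  have h1 := hc (α + β)
  have h2 := hc (α - β)
  have h3 := hc α
  have h4 := hc β
  simp only [dotProduct_add, dotProduct_sub, add_dotProduct, sub_dotProduct] at h1 h2
  have e1 : ∀ x ∈ X, (x ⬝ᵥ α + x ⬝ᵥ β)^4
      = (x ⬝ᵥ α)^4 + 6*((x ⬝ᵥ α)^2*(x ⬝ᵥ β)^2) + 4*((x ⬝ᵥ α)^3*(x ⬝ᵥ β)) + 4*((x ⬝ᵥ α)*(x ⬝ᵥ β)^3) + (x ⬝ᵥ β)^4 := by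
    intro x _; ring
  have e2 : ∀ x ∈ X, (x ⬝ᵥ α - x ⬝ᵥ β)^4
      = (x ⬝ᵥ α)^4 + 6*((x ⬝ᵥ α)^2*(x ⬝ᵥ β)^2) - 4*((x ⬝ᵥ α)^3*(x ⬝ᵥ β)) - 4*((x ⬝ᵥ α)*(x ⬝ᵥ β)^3) + (x ⬝ᵥ β)^4 := by
    intro x _; ring
  rw [Finset.sum_congr rfl e1] at h1
  rw [Finset.sum_congr rfl e2] at h2
  simp only [Finset.sum_add_distrib, Finset.sum_sub_distrib, ← Finset.mul_sum] at h1 h2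
  rw [dotProduct_comm β α] at h1 h2
  linear_combination (h1 + h2 - 2*h3 - 2*h4)/12

lemma polar3 (hc : ∀ α : Fin n → ℝ, ∑ x ∈ X, (x ⬝ᵥ α) ^ 4 = c * (α ⬝ᵥ α) ^ 2) :
    ∀ α β γ : Fin n → ℝ, ∑ x ∈ X, (x ⬝ᵥ α)^2 * ((x ⬝ᵥ β) * (x ⬝ᵥ γ))
      = (c/3) * ((α ⬝ᵥ α)*(β ⬝ᵥ γ) + 2*((α ⬝ᵥ β)*(α ⬝ᵥ γ))) := by
  intro α β γ
  have h1 := polar2 X c hc α (β + γ)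
  have h2 := polar2 X c hc α (β - γ)
  simp only [dotProduct_add, dotProduct_sub, add_dotProduct, sub_dotProduct] at h1 h2
  have e1 : ∀ x ∈ X, (x ⬝ᵥ α)^2 * (x ⬝ᵥ β + x ⬝ᵥ γ)^2
      = (x ⬝ᵥ α)^2*(x ⬝ᵥ β)^2 + 2*((x ⬝ᵥ α)^2 * ((x ⬝ᵥ β)*(x ⬝ᵥ γ))) + (x ⬝ᵥ α)^2*(x ⬝ᵥ γ)^2 := by
    intro x _; ring
  have e2 : ∀ x ∈ X, (x ⬝ᵥ α)^2 * (x ⬝ᵥ β - x ⬝ᵥ γ)^2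
      = (x ⬝ᵥ α)^2*(x ⬝ᵥ β)^2 - 2*((x ⬝ᵥ α)^2 * ((x ⬝ᵥ β)*(x ⬝ᵥ γ))) + (x ⬝ᵥ α)^2*(x ⬝ᵥ γ)^2 := by
    intro x _; ring
  rw [Finset.sum_congr rfl e1] at h1
  rw [Finset.sum_congr rfl e2] at h2
  simp only [Finset.sum_add_distrib, Finset.sum_sub_distrib, ← Finset.mul_sum] at h1 h2
  rw [dotProduct_comm γ β] at h1 h2
  linear_combination (h1 - h2)/4

lemma polar4 (hc : ∀ α : Fin n → ℝ, ∑ x ∈ X, (x ⬝ᵥ α) ^ 4 = c * (α ⬝ᵥ α) ^ 2) :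
    ∀ α β γ δ : Fin n → ℝ, ∑ x ∈ X, (x ⬝ᵥ α) * (x ⬝ᵥ β) * ((x ⬝ᵥ γ) * (x ⬝ᵥ δ))
      = (c/3) * ((α ⬝ᵥ β)*(γ ⬝ᵥ δ) + (α ⬝ᵥ γ)*(β ⬝ᵥ δ) + (α ⬝ᵥ δ)*(β ⬝ᵥ γ)) := by
  intro α β γ δ
  have h1 := polar3 X c hc (α + β) γ δ
  have h2 := polar3 X c hc (α - β) γ δ
  simp only [dotProduct_add, dotProduct_sub, add_dotProduct, sub_dotProduct] at h1 h2
  have e1 : ∀ x ∈ X, (x ⬝ᵥ α + x ⬝ᵥ β)^2 * ((x ⬝ᵥ γ) * (x ⬝ᵥ δ))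
      = (x ⬝ᵥ α)^2 * ((x ⬝ᵥ γ)*(x ⬝ᵥ δ)) + 2*((x ⬝ᵥ α)*(x ⬝ᵥ β)*((x ⬝ᵥ γ)*(x ⬝ᵥ δ))) + (x ⬝ᵥ β)^2 * ((x ⬝ᵥ γ)*(x ⬝ᵥ δ)) := by
    intro x _; ring
  have e2 : ∀ x ∈ X, (x ⬝ᵥ α - x ⬝ᵥ β)^2 * ((x ⬝ᵥ γ) * (x ⬝ᵥ δ))
      = (x ⬝ᵥ α)^2 * ((x ⬝ᵥ γ)*(x ⬝ᵥ δ)) - 2*((x ⬝ᵥ α)*(x ⬝ᵥ β)*((x ⬝ᵥ γ)*(x ⬝ᵥ δ))) + (x ⬝ᵥ β)^2 * ((x ⬝ᵥ γ)*(x ⬝ᵥ δ)) := by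
    intro x _; ring
  rw [Finset.sum_congr rfl e1] at h1
  rw [Finset.sum_congr rfl e2] at h2
  simp only [Finset.sum_add_distrib, Finset.sum_sub_distrib, ← Finset.mul_sum] at h1 h2
  rw [dotProduct_comm β α] at h1 h2
  linear_combination (h1 - h2)/4

lemma moment4 (hc : ∀ α : Fin n → ℝ, ∑ x ∈ X, (x ⬝ᵥ α) ^ 4 = c * (α ⬝ᵥ α) ^ 2) :
    ∀ i j k l : Fin n, ∑ x ∈ X, x i * x j * (x k * x l)
      = (c/3) * ((if i = j then (1:ℝ) else 0) * (if k = l then (1:ℝ) else 0)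
          + (if i = k then (1:ℝ) else 0) * (if j = l then (1:ℝ) else 0)
          + (if i = l then (1:ℝ) else 0) * (if j = k then (1:ℝ) else 0)) := by
  intro i j k l
  have h := polar4 X c hc (Pi.single i 1) (Pi.single j 1) (Pi.single k 1) (Pi.single l 1)
  simp only [single_dotProduct, dotProduct_single, one_mul, mul_one, Pi.single_apply] at h
  convert h using 2 <;> simp [eq_comm]


variable {n : ℕ} (X : Finset (Fin n → ℝ)) (c : ℝ)

lemma quadzero (m : ℝ) (hm : 0 < m) (hne : X.Nonempty)
    (hnorm : ∀ x ∈ X, x ⬝ᵥ x = m)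
    (hc : ∀ α : Fin n → ℝ, ∑ x ∈ X, (x ⬝ᵥ α) ^ 4 = c * (α ⬝ᵥ α) ^ 2)
    (M4 : ∀ i j k l : Fin n, ∑ x ∈ X, x i * x j * (x k * x l)
      = (c/3) * ((if i = j then (1:ℝ) else 0) * (if k = l then (1:ℝ) else 0)
          + (if i = k then (1:ℝ) else 0) * (if j = l then (1:ℝ) else 0)
          + (if i = l then (1:ℝ) else 0) * (if j = k then (1:ℝ) else 0)))
    (C : Matrix (Fin n) (Fin n) ℝ) (hC : C.IsSymm)
    (h0 : ∀ x ∈ X, ∑ p : Fin n × Fin n, C p.1 p.2 * (x p.1 * x p.2) = 0) :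
    C = 0 := by
  -- c is positive
  obtain ⟨x₀, hx₀⟩ := hne
  have hcm := hc x₀
  rw [hnorm x₀ hx₀] at hcm
  have hge : m ^ 4 ≤ c * m ^ 2 := by
    rw [← hcm]
    have : (x₀ ⬝ᵥ x₀) ^ 4 ≤ ∑ x ∈ X, (x ⬝ᵥ x₀) ^ 4 :=
      Finset.single_le_sum (f := fun x => (x ⬝ᵥ x₀) ^ 4) (fun x _ => by positivity) hx₀
    rwa [hnorm x₀ hx₀] at this
  have hcpos : 0 < c := by nlinarith [pow_pos hm 2, pow_pos hm 4]
  -- main computation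
  have key : ∑ x ∈ X, (∑ p : Fin n × Fin n, C p.1 p.2 * (x p.1 * x p.2))^2
      = (c/3) * ((∑ i, C i i)^2 + 2 * ∑ p : Fin n × Fin n, (C p.1 p.2)^2) := by
    have e1 : ∀ x : Fin n → ℝ, (∑ p : Fin n × Fin n, C p.1 p.2 * (x p.1 * x p.2))^2
        = ∑ p : Fin n × Fin n, ∑ q : Fin n × Fin n,
            C p.1 p.2 * C q.1 q.2 * (x p.1 * x p.2 * (x q.1 * x q.2)) := by
      intro x
      rw [sq, Finset.sum_mul_sum]
      exact Finset.sum_congr rfl fun p _ => Finset.sum_congr rfl fun q _ => by ring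
    rw [Finset.sum_congr rfl fun x _ => e1 x]
    rw [Finset.sum_comm]
    have e2 : ∀ p : Fin n × Fin n, ∑ x ∈ X, ∑ q : Fin n × Fin n,
          C p.1 p.2 * C q.1 q.2 * (x p.1 * x p.2 * (x q.1 * x q.2))
        = (c/3) * ∑ q : Fin n × Fin n,
            (C p.1 p.2 * C q.1 q.2 * ((if p.1 = p.2 then (1:ℝ) else 0) * (if q.1 = q.2 then (1:ℝ) else 0))
          + C p.1 p.2 * C q.1 q.2 * ((if p.1 = q.1 then (1:ℝ) else 0) * (if p.2 = q.2 then (1:ℝ) else 0))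
          + C p.1 p.2 * C q.1 q.2 * ((if p.1 = q.2 then (1:ℝ) else 0) * (if p.2 = q.1 then (1:ℝ) else 0))) := by
      intro p
      rw [Finset.sum_comm, Finset.mul_sum]
      refine Finset.sum_congr rfl fun q _ => ?_
      rw [← Finset.mul_sum, M4 p.1 p.2 q.1 q.2]
      ring
    rw [Finset.sum_congr rfl fun p _ => e2 p, ← Finset.mul_sum]
    simp only [Finset.sum_add_distrib]
    have S1 : ∑ p : Fin n × Fin n, ∑ q : Fin n × Fin n,
        C p.1 p.2 * C q.1 q.2 * ((if p.1 = p.2 then (1:ℝ) else 0) * (if q.1 = q.2 then (1:ℝ) else 0))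
        = (∑ i, C i i)^2 := by
      have hT : ∑ p : Fin n × Fin n, C p.1 p.2 * (if p.1 = p.2 then (1:ℝ) else 0) = ∑ i, C i i := by
        rw [Fintype.sum_prod_type]
        simp
      rw [sq, ← hT, Finset.sum_mul_sum]
      exact Finset.sum_congr rfl fun p _ => Finset.sum_congr rfl fun q _ => by ring
    have S2 : ∑ p : Fin n × Fin n, ∑ q : Fin n × Fin n,
        C p.1 p.2 * C q.1 q.2 * ((if p.1 = q.1 then (1:ℝ) else 0) * (if p.2 = q.2 then (1:ℝ) else 0))
        = ∑ p : Fin n × Fin n, (C p.1 p.2)^2 := by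
      refine Finset.sum_congr rfl fun p _ => ?_
      rw [Fintype.sum_prod_type]
      simp [mul_ite, ite_mul, Finset.sum_ite_eq, sq, mul_comm]
    have S3 : ∑ p : Fin n × Fin n, ∑ q : Fin n × Fin n,
        C p.1 p.2 * C q.1 q.2 * ((if p.1 = q.2 then (1:ℝ) else 0) * (if p.2 = q.1 then (1:ℝ) else 0))
        = ∑ p : Fin n × Fin n, (C p.1 p.2)^2 := by
      refine Finset.sum_congr rfl fun p _ => ?_
      rw [Fintype.sum_prod_type]
      simp only [mul_ite, ite_mul, mul_zero, zero_mul, mul_one, one_mul]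
      simp [Finset.sum_ite_eq, hC.apply p.1 p.2, sq, mul_comm]
    rw [S1, S2, S3]
    ring
  have hz : ∑ x ∈ X, (∑ p : Fin n × Fin n, C p.1 p.2 * (x p.1 * x p.2))^2 = 0 :=
    Finset.sum_eq_zero fun x hx => by rw [h0 x hx]; ring
  rw [hz] at key
  have hsq : ∑ p : Fin n × Fin n, (C p.1 p.2)^2 = 0 := by
    have h1 : (0:ℝ) ≤ (∑ i, C i i)^2 := sq_nonneg _
    have h2 : (0:ℝ) ≤ ∑ p : Fin n × Fin n, (C p.1 p.2)^2 :=
      Finset.sum_nonneg fun p _ => sq_nonneg _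
    nlinarith
  ext i j
  have := (Finset.sum_eq_zero_iff_of_nonneg (fun p _ => sq_nonneg (C p.1 p.2))).mp hsq (i, j)
      (Finset.mem_univ _)
  simpa [sq_eq_zero_iff] using this

/-- If a finite antipodal set `X ⊂ S^{n-1}(m)` (with `m > 0`) satisfies the
degree-4 design condition `∑_{x∈X}(x,α)⁴ = c(α,α)²` for all `α`, then the
rank-one matrices `x·xᵀ`, `x ∈ X`, span the symmetric `n×n` matrices. -/
theorem stmt5 {n : ℕ} (m : ℝ) (hm : 0 < m) (X : Finset (Fin n → ℝ))
    (hne : X.Nonempty) (hanti : ∀ x ∈ X, -x ∈ X)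
    (hnorm : ∀ x ∈ X, x ⬝ᵥ x = m) (c : ℝ)
    (hc : ∀ α : Fin n → ℝ, ∑ x ∈ X, (x ⬝ᵥ α) ^ 4 = c * (α ⬝ᵥ α) ^ 2) :
    ∀ A : Matrix (Fin n) (Fin n) ℝ, A.IsSymm →
      A ∈ Submodule.span ℝ ((fun x => vecMulVec x x) '' (X : Set (Fin n → ℝ))) := by
  intro A hA
  by_contra hmem
  obtain ⟨f, hf0, hker⟩ := Submodule.exists_dual_map_eq_bot_of_notMem hmem inferInstance
  have hfspan : ∀ y ∈ Submodule.span ℝ ((fun x => vecMulVec x x) '' (X : Set (Fin n → ℝ))),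
      f y = 0 := by
    intro y hy
    have : f y ∈ (Submodule.span ℝ ((fun x => vecMulVec x x) '' (X : Set (Fin n → ℝ)))).map f :=
      Submodule.mem_map_of_mem hy
    rwa [hker, Submodule.mem_bot] at this
  have hfx : ∀ x ∈ X, f (vecMulVec x x) = 0 := fun x hx =>
    hfspan _ (Submodule.subset_span ⟨x, hx, rfl⟩)
  set B : Matrix (Fin n) (Fin n) ℝ := Matrix.of fun i j => f (Matrix.single i j 1) with hB
  have hfeq : ∀ M : Matrix (Fin n) (Fin n) ℝ, f M = ∑ i, ∑ j, M i j * B i j := by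
    intro M
    conv_lhs => rw [matrix_eq_sum_single M]
    rw [map_sum]
    refine Finset.sum_congr rfl fun i _ => ?_
    rw [map_sum]
    refine Finset.sum_congr rfl fun j _ => ?_
    rw [show Matrix.single i j (M i j) = (M i j) • Matrix.single i j 1 by
      rw [smul_single, smul_eq_mul, mul_one], f.map_smul, smul_eq_mul]
    rfl
  set C : Matrix (Fin n) (Fin n) ℝ := B + Bᵀ with hCdef
  have hCsymm : C.IsSymm := isSymm_add_transpose_self B
  have hCzero : C = 0 := by
    refine quadzero X c m hm hne hnorm hc (moment4 X c hc) C hCsymm fun x hx => ?_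
    have h1 : ∑ i, ∑ j, (x i * x j) * B i j = 0 := by
      have := hfx x hx
      rw [hfeq] at this
      simpa [vecMulVec_apply] using this
    have h2 : ∑ i, ∑ j, (x i * x j) * B j i = 0 := by
      rw [Finset.sum_comm]
      rw [← h1]
      exact Finset.sum_congr rfl fun j _ => Finset.sum_congr rfl fun i _ => by ring
    rw [Fintype.sum_prod_type]
    have : ∀ i j : Fin n, C (i,j).1 (i,j).2 * (x (i,j).1 * x (i,j).2)
        = (x i * x j) * B i j + (x i * x j) * B j i := by
      intro i j; simp [hCdef, transpose_apply]; ring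
    calc ∑ i, ∑ j, C (i,j).1 (i,j).2 * (x (i,j).1 * x (i,j).2)
        = ∑ i, ∑ j, ((x i * x j) * B i j + (x i * x j) * B j i) :=
          Finset.sum_congr rfl fun i _ => Finset.sum_congr rfl fun j _ => this i j
      _ = 0 := by simp only [Finset.sum_add_distrib]; rw [h1, h2]; norm_num
  -- f A = 0, contradiction
  have hfA : f A = 0 := by
    have hswap : ∑ i, ∑ j, A i j * B j i = ∑ i, ∑ j, A i j * B i j := by
      rw [Finset.sum_comm]
      exact Finset.sum_congr rfl fun j _ => Finset.sum_congr rfl fun i _ => by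
        rw [show A i j = A j i from (hA.apply i j).symm]
    have hAC : ∑ i, ∑ j, A i j * C i j = 2 * ∑ i, ∑ j, A i j * B i j := by
      have expand : ∀ i j, A i j * C i j = A i j * B i j + A i j * B j i := by
        intro i j; simp only [hCdef, Matrix.add_apply, transpose_apply]; ring
      rw [Finset.sum_congr rfl fun i _ => Finset.sum_congr rfl fun j _ => expand i j]
      simp only [Finset.sum_add_distrib]
      rw [hswap]; ring
    have hz : ∑ i, ∑ j, A i j * C i j = 0 := by rw [hCzero]; simp
    rw [hfeq A]
    linarith [hAC, hz]
  exact hf0 hfA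
end Aux
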